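/- arXiv:1411.4708 — 5 statements merged into one kernel-verified Lean document; each statement's English description precedes it below -/
import Mathlib

section
/- Let f be a density on ℝ that is symmetric about 0 (f(−x) = f(x)), nonincreasing on [0,∞), integrates to 1, and is bounded by f(0). Then for every δ with |δ| ≤ 1, ∫_ℝ |f(t+δ) − f(t)| dt ≤ 3 f(0) |δ|. -/
open MeasureTheory Set

private lemma L1_aux
    (f : ℝ → ℝ) (hmeas : Measurable f) (h0 : ∀ x, 0 ≤ f x)
    (hint : ∫ x, f x = 1) (heven : ∀ x, f (-x) = f x)
    (hmono : AntitoneOn f (Set.Ici 0)) (hbd : ∀ x, f x ≤ f 0)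
    (δ : ℝ) (hδ : 0 ≤ δ) :
    ∫ t, |f (t + δ) - f t| ≤ 3 * f 0 * δ := by
  have hf : Integrable f := integrable_of_integral_eq_one hint
  have hfδ : Integrable (fun t => f (t + δ)) :=
    hf.comp_add_right δ
  have hg : Integrable (fun t => |f (t + δ) - f t|) := (hfδ.sub hf).abs
  have hshift : ∀ s : Set ℝ, ∫ t in (fun x : ℝ => x + δ) ⁻¹' s, f (t + δ) = ∫ t in s, f t :=
    fun s => (measurePreserving_add_right volume δ).setIntegral_preimage_emb
      (MeasurableEquiv.addRight δ).measurableEmbedding f s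
  -- constant bound on intervals of length δ
  have hIoc : ∀ a : ℝ, ∫ t in Ioc a (a + δ), f t ≤ f 0 * δ := by
    intro a
    calc ∫ t in Ioc a (a + δ), f t ≤ ∫ _ in Ioc a (a + δ), f 0 :=
          setIntegral_mono_on hf.integrableOn (integrableOn_const (by
            simp [Real.volume_Ioc])) measurableSet_Ioc (fun x _ => hbd x)
      _ = f 0 * δ := by
          rw [setIntegral_const, measureReal_def, Real.volume_Ioc, smul_eq_mul]
          rw [show a + δ - a = δ by ring, ENNReal.toReal_ofReal hδ]
          ring
  -- split the line
  have hsplit : ∫ t, |f (t + δ) - f t|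
      = (∫ t in Iic 0, |f (t + δ) - f t|) + ∫ t in Ioi 0, |f (t + δ) - f t| :=
    (intervalIntegral.integral_Iic_add_Ioi hg.integrableOn hg.integrableOn).symm
  have hsplit2 : ∫ t in Iic 0, |f (t + δ) - f t|
      = (∫ t in Iic (-δ), |f (t + δ) - f t|) + ∫ t in Ioc (-δ) 0, |f (t + δ) - f t| := by
    rw [← setIntegral_union (Iic_disjoint_Ioc le_rfl) measurableSet_Ioc
      hg.integrableOn hg.integrableOn, Iic_union_Ioc_eq_Iic (by linarith)]
  -- piece on (0, ∞)
  have hA : ∫ t in Ioi 0, |f (t + δ) - f t| ≤ f 0 * δ := by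
    have e1 : ∫ t in Ioi 0, |f (t + δ) - f t| = ∫ t in Ioi 0, (f t - f (t + δ)) := by
      refine setIntegral_congr_fun measurableSet_Ioi (fun t ht => ?_)
      have h1 : f (t + δ) ≤ f t :=
        hmono (le_of_lt (mem_Ioi.mp ht)) (by simp only [mem_Ici]; linarith [le_of_lt (mem_Ioi.mp ht)]) (by linarith)
      rw [abs_of_nonpos (by linarith), neg_sub]
    have e2 : ∫ t in Ioi 0, f (t + δ) = ∫ t in Ioi δ, f t := by
      have : (fun x : ℝ => x + δ) ⁻¹' Ioi δ = Ioi 0 := by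
        ext x; simp [mem_Ioi]
      rw [← this, hshift]
    have e3 : ∫ t in Ioi 0, f t = (∫ t in Ioc 0 δ, f t) + ∫ t in Ioi δ, f t := by
      rw [← setIntegral_union (Ioc_disjoint_Ioi le_rfl) measurableSet_Ioi
        hf.integrableOn hf.integrableOn, Ioc_union_Ioi_eq_Ioi hδ]
    rw [e1, integral_sub hf.integrableOn hfδ.integrableOn, e2, e3]
    have := hIoc 0
    rw [zero_add] at this
    linarith
  -- piece on (-∞, -δ]
  have hC : ∫ t in Iic (-δ), |f (t + δ) - f t| ≤ f 0 * δ := by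
    have e1 : ∫ t in Iic (-δ), |f (t + δ) - f t| = ∫ t in Iic (-δ), (f (t + δ) - f t) := by
      refine setIntegral_congr_fun measurableSet_Iic (fun t ht => ?_)
      have ht' : t ≤ -δ := ht
      have h1 : f t ≤ f (t + δ) := by
        have h2 : f (-t) ≤ f (-(t + δ)) := by
          refine hmono (by simp only [mem_Ici]; linarith) (by simp only [mem_Ici]; linarith)
            (by linarith)
        rwa [heven, heven] at h2
      rw [abs_of_nonneg (by linarith)]
    have e2 : ∫ t in Iic (-δ), f (t + δ) = ∫ t in Iic 0, f t := by
      have : (fun x : ℝ => x + δ) ⁻¹' Iic 0 = Iic (-δ) := by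
        ext x; simp only [mem_preimage, mem_Iic]; constructor <;> intro h <;> linarith
      rw [← this, hshift]
    have e3 : ∫ t in Iic 0, f t = (∫ t in Iic (-δ), f t) + ∫ t in Ioc (-δ) 0, f t := by
      rw [← setIntegral_union (Iic_disjoint_Ioc le_rfl) measurableSet_Ioc
        hf.integrableOn hf.integrableOn, Iic_union_Ioc_eq_Iic (by linarith)]
    rw [e1, integral_sub hfδ.integrableOn hf.integrableOn, e2, e3]
    have := hIoc (-δ)
    rw [neg_add_cancel] at this
    linarith
  -- middle piece
  have hB : ∫ t in Ioc (-δ) 0, |f (t + δ) - f t| ≤ f 0 * δ := by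
    calc ∫ t in Ioc (-δ) 0, |f (t + δ) - f t| ≤ ∫ _ in Ioc (-δ) 0, f 0 :=
          setIntegral_mono_on hg.integrableOn (integrableOn_const (by
            simp [Real.volume_Ioc])) measurableSet_Ioc (fun x _ =>
            abs_sub_le_iff.2 ⟨by linarith [h0 x, hbd (x + δ)], by linarith [h0 (x + δ), hbd x]⟩)
      _ = f 0 * δ := by
          rw [setIntegral_const, measureReal_def, Real.volume_Ioc, smul_eq_mul]
          rw [show (0 : ℝ) - -δ = δ by ring, ENNReal.toReal_ofReal hδ]
          ring
  rw [hsplit, hsplit2]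
  linarith

/-- For a symmetric density `f`, nonincreasing on `[0,∞)` and bounded by `f 0`, the
`L¹`-modulus of continuity of translation satisfies `∫|f(t+δ) − f(t)| dt ≤ 3 f(0) |δ|`
for `|δ| ≤ 1`. -/
theorem L1_translation_bound
    (f : ℝ → ℝ) (hmeas : Measurable f) (h0 : ∀ x, 0 ≤ f x)
    (hint : ∫ x, f x = 1) (heven : ∀ x, f (-x) = f x)
    (hmono : AntitoneOn f (Set.Ici 0)) (hbd : ∀ x, f x ≤ f 0)
    (δ : ℝ) (hδ : |δ| ≤ 1) :
    ∫ t, |f (t + δ) - f t| ≤ 3 * f 0 * |δ| := by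
  rcases le_or_gt 0 δ with h | h
  · rw [abs_of_nonneg h]
    exact L1_aux f hmeas h0 hint heven hmono hbd δ h
  · rw [abs_of_neg h]
    have key : ∫ t, |f (t + δ) - f t| = ∫ t, |f (t + -δ) - f t| := by
      have := integral_add_right_eq_self (μ := volume)
        (fun t : ℝ => |f (t + δ) - f t|) (-δ)
      rw [← this]
      congr 1
      ext t
      rw [show t + -δ + δ = t by ring, abs_sub_comm]
    rw [key]
    exact L1_aux f hmeas h0 hint heven hmono hbd (-δ) (by linarith)
end

section
/- Let p = λ e^{ψ(·−a)} + (1−λ) e^{ψ(·−b)} where ψ is an even upper semi-continuous concave function with ∫e^ψ = 1, a < b are real, and λ ∈ [0,1]. Then ∫_ℝ |log p(t)| p(t) dt < ∞. -/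
open MeasureTheory

lemma my_log_le_sqrt {w : ℝ} (hw : 1 ≤ w) : Real.log w ≤ Real.sqrt w := by
  have hw0 : (0:ℝ) < w := lt_of_lt_of_le one_pos hw
  set s := Real.sqrt (Real.sqrt w) with hs
  have hs0 : 0 < s := Real.sqrt_pos.2 (Real.sqrt_pos.2 hw0)
  have hsq : s ^ 2 = Real.sqrt w := Real.sq_sqrt (Real.sqrt_nonneg w)
  have hs4 : (s ^ 2) ^ 2 = w := by rw [hsq]; exact Real.sq_sqrt hw0.le
  have hlog : Real.log w = 4 * Real.log s := by
    rw [← hs4, Real.log_pow, Real.log_pow]; push_cast; ring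
  have h1 : Real.log s ≤ s - 1 := Real.log_le_sub_one_of_pos hs0
  have h2 : 4 * s - 4 ≤ s ^ 2 := by nlinarith [sq_nonneg (s - 2)]
  calc Real.log w = 4 * Real.log s := hlog
    _ ≤ 4 * (s - 1) := by linarith
    _ ≤ s ^ 2 := by linarith
    _ = Real.sqrt w := hsq

lemma my_sqrt_add_le {x y : ℝ} (hx : 0 ≤ x) (hy : 0 ≤ y) :
    Real.sqrt (x + y) ≤ Real.sqrt x + Real.sqrt y := by
  have h1 := Real.mul_self_sqrt hx
  have h2 := Real.mul_self_sqrt hy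
  have h3 : x + y ≤ (Real.sqrt x + Real.sqrt y) ^ 2 := by
    nlinarith [Real.sqrt_nonneg x, Real.sqrt_nonneg y]
  calc Real.sqrt (x + y) ≤ Real.sqrt ((Real.sqrt x + Real.sqrt y) ^ 2) :=
        Real.sqrt_le_sqrt h3
    _ = Real.sqrt x + Real.sqrt y :=
        Real.sqrt_sq (by positivity)

lemma my_abs_log_mul_self_le {u M : ℝ} (hu : 0 ≤ u) (huM : u ≤ M) :
    |Real.log u| * u ≤ Real.sqrt u + Real.sqrt M * u := by
  rcases hu.lt_or_eq with h | h
  · rcases le_or_gt u 1 with h1 | h1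
    · have hlogle : Real.log u⁻¹ ≤ Real.sqrt u⁻¹ :=
        my_log_le_sqrt ((one_le_inv₀ h).2 h1)
      have habs : |Real.log u| = Real.log u⁻¹ := by
        rw [Real.log_inv, abs_of_nonpos (Real.log_nonpos hu h1)]
      have hsu : Real.sqrt u * Real.sqrt u = u := Real.mul_self_sqrt hu
      have hspos : 0 < Real.sqrt u := Real.sqrt_pos.2 h
      have hinv : Real.sqrt u⁻¹ * u = Real.sqrt u := by
        rw [Real.sqrt_inv]
        field_simp; rw [Real.sq_sqrt hu]
      have : |Real.log u| * u ≤ Real.sqrt u⁻¹ * u := by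
        rw [habs]; exact mul_le_mul_of_nonneg_right hlogle hu
      rw [hinv] at this
      nlinarith [Real.sqrt_nonneg M]
    · have hM1 : 1 ≤ M := le_trans h1.le huM
      have : |Real.log u| = Real.log u := abs_of_nonneg (Real.log_nonneg h1.le)
      rw [this]
      have h2 : Real.log u ≤ Real.sqrt u := my_log_le_sqrt h1.le
      have h3 : Real.sqrt u ≤ Real.sqrt M := Real.sqrt_le_sqrt huM
      nlinarith [Real.sqrt_nonneg u]
  · simp [← h]

lemma my_integrable_exp_neg_abs {c : ℝ} (hc : 0 < c) :
    Integrable (fun x : ℝ => Real.exp (-c * |x|)) := by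
  have hIoi : IntegrableOn (fun x : ℝ => Real.exp (-c * |x|)) (Set.Ioi 0) := by
    refine (exp_neg_integrableOn_Ioi 0 hc).congr_fun ?_ measurableSet_Ioi
    intro x hx
    simp [abs_of_pos (Set.mem_Ioi.1 hx)]
  have hIci : IntegrableOn (fun x : ℝ => Real.exp (-c * |x|)) (Set.Ici 0) := by
    rwa [integrableOn_Ici_iff_integrableOn_Ioi]
  rw [← integrableOn_univ, ← Set.Iio_union_Ici (a := (0 : ℝ)), integrableOn_union]
  refine ⟨?_, hIci⟩
  rw [← (Measure.measurePreserving_neg (volume : Measure ℝ)).integrableOn_comp_preimage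
      (Homeomorph.neg ℝ).measurableEmbedding]
  simp only [Function.comp_def, abs_neg, Set.neg_preimage, Set.neg_Iio, neg_zero]
  exact hIci.mono_set Set.Ioi_subset_Ici_self

/-- Let `f = e^ψ` be a zero-symmetric log-concave (upper semicontinuous) density and
`p = λ f(·−a) + (1−λ) f(·−b)` with `a < b`, `λ ∈ [0,1]`.
Then `∫ |log p(t)| p(t) dt < ∞`. -/
theorem mixture_entropy_integrable
    (f : ℝ → ℝ) (hmeas : Measurable f) (h0 : ∀ x, 0 ≤ f x)
    (husc : UpperSemicontinuous f)
    (hintg : Integrable f) (hden : ∫ x, f x = 1)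
    (heven : ∀ x, f (-x) = f x)
    (hlc : ∀ x y t : ℝ, 0 ≤ t → t ≤ 1 →
      f x ^ t * f y ^ (1 - t) ≤ f (t * x + (1 - t) * y))
    (a b lam : ℝ) (hab : a < b) (hl0 : 0 ≤ lam) (hl1 : lam ≤ 1) :
    Integrable (fun t =>
      |Real.log (lam * f (t - a) + (1 - lam) * f (t - b))| *
        (lam * f (t - a) + (1 - lam) * f (t - b))) := by
  -- f is bounded by f 0
  have hub : ∀ x, f x ≤ f 0 := by
    intro x
    have h := hlc x (-x) (1/2) (by norm_num) (by norm_num)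
    rw [show (1/2 : ℝ) * x + (1 - 1/2) * (-x) = 0 by ring, heven] at h
    have he : f x ^ ((1:ℝ)/2) * f x ^ (1 - (1:ℝ)/2) = f x := by
      rw [← Real.rpow_add' (h0 x) (by norm_num : (1:ℝ)/2 + (1 - 1/2) ≠ 0)]
      norm_num
    rwa [he] at h
  -- f 0 > 0
  have hpos0 : 0 < f 0 := by
    rcases (h0 0).lt_or_eq with h | h
    · exact h
    · exfalso
      have hz : ∀ x, f x = 0 := fun x => le_antisymm ((hub x).trans h.ge) (h0 x)
      rw [show f = fun _ => (0:ℝ) from funext hz] at hden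
      simp at hden
  -- f even via abs
  have hfabs : ∀ x : ℝ, f |x| = f x := by
    intro x
    rcases abs_choice x with h | h
    · rw [h]
    · rw [h, heven]
  -- f nonincreasing on [0,∞)
  have hmono : ∀ x y : ℝ, 0 ≤ x → x ≤ y → f y ≤ f x := by
    intro x y hx hxy
    rcases (hx.trans hxy).lt_or_eq with hy | hy
    · set t := (x + y) / (2 * y) with htdef
      have ht0 : 0 ≤ t := div_nonneg (by linarith) (by linarith)
      have ht1 : t ≤ 1 := by rw [div_le_one (by linarith)]; linarith
      have h := hlc y (-y) t ht0 ht1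
      have e : t * y + (1 - t) * (-y) = x := by
        rw [htdef]; field_simp; ring
      rw [e, heven] at h
      rcases (h0 y).lt_or_eq with hfy | hfy
      · have he : f y ^ t * f y ^ (1 - t) = f y := by
          rw [← Real.rpow_add hfy]; norm_num
        rwa [he] at h
      · rw [← hfy]; exact h0 x
    · rw [← hy] at hxy ⊢
      rw [le_antisymm hxy hx]
  -- there is a point where f drops below f 0
  have hx0 : ∃ x0 : ℝ, 0 < x0 ∧ f x0 < f 0 := by
    by_contra hcon
    push_neg at hcon
    have hge : ∀ x, f 0 ≤ f x := by
      intro x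
      rcases eq_or_ne x 0 with rfl | hx
      · exact le_rfl
      · have := hcon |x| (abs_pos.2 hx)
        rwa [hfabs] at this
    have hconst : Integrable (fun _ : ℝ => f 0) :=
      hintg.mono' aestronglyMeasurable_const (Filter.Eventually.of_forall fun x => by
        rw [Real.norm_eq_abs, abs_of_nonneg (h0 0)]
        exact hge x)
    rw [integrable_const_iff] at hconst
    rcases hconst with h | h
    · exact absurd h (ne_of_gt hpos0)
    · have h := h.measure_univ_lt_top; rw [Real.volume_univ] at h
      exact absurd h (by simp)
  -- exponential decay
  have hexp : ∃ c : ℝ, 0 < c ∧ ∃ C : ℝ, 0 ≤ C ∧ ∀ x, f x ≤ C * Real.exp (-c * |x|) := by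
    obtain ⟨x0, hx0pos, hx0lt⟩ := hx0
    rcases (h0 x0).lt_or_eq with hfx0 | hfx0
    · -- f x0 > 0
      set c := (Real.log (f 0) - Real.log (f x0)) / x0 with hc
      have hcpos : 0 < c := div_pos (sub_pos.2 (Real.log_lt_log hfx0 hx0lt)) hx0pos
      refine ⟨c, hcpos, f 0 * Real.exp (c * x0), by positivity, ?_⟩
      intro x
      rcases le_or_gt |x| x0 with hle | hgt
      · have h1 : Real.exp (c * x0) * Real.exp (-c * |x|) = Real.exp (c * x0 + -c * |x|) :=
          (Real.exp_add _ _).symm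
        have h2 : (1:ℝ) ≤ Real.exp (c * x0 + -c * |x|) := by
          rw [← Real.exp_zero]
          exact Real.exp_le_exp.2 (by nlinarith [abs_nonneg x])
        calc f x ≤ f 0 := hub x
          _ = f 0 * 1 := (mul_one _).symm
          _ ≤ f 0 * (Real.exp (c * x0) * Real.exp (-c * |x|)) := by
              rw [h1]; exact mul_le_mul_of_nonneg_left h2 hpos0.le
          _ = f 0 * Real.exp (c * x0) * Real.exp (-c * |x|) := (mul_assoc _ _ _).symm
      · set y := |x| with hydef
        have hy' : 0 < y := hx0pos.trans hgt
        rcases (h0 y).lt_or_eq with hfy | hfy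
        · set t := x0 / y with htdef
          have htpos : 0 < t := div_pos hx0pos hy'
          have ht1 : t ≤ 1 := by rw [htdef, div_le_one hy']; exact hgt.le
          have h := hlc y 0 t htpos.le ht1
          rw [show t * y + (1 - t) * 0 = x0 by rw [htdef]; field_simp; ring] at h
          have hLpos : 0 < f y ^ t * f 0 ^ (1 - t) :=
            mul_pos (Real.rpow_pos_of_pos hfy t) (Real.rpow_pos_of_pos hpos0 _)
          have hlog := Real.log_le_log hLpos h
          rw [Real.log_mul (ne_of_gt (Real.rpow_pos_of_pos hfy t))
              (ne_of_gt (Real.rpow_pos_of_pos hpos0 _)),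
            Real.log_rpow hfy, Real.log_rpow hpos0] at hlog
          have hct : c * y = (Real.log (f 0) - Real.log (f x0)) / t := by
            rw [hc, htdef]
            field_simp
          have hkey : Real.log (f y) ≤ Real.log (f 0) - c * y := by
            rw [hct]
            have h2 : t * Real.log (f y) ≤
                t * (Real.log (f 0) - (Real.log (f 0) - Real.log (f x0)) / t) := by
              have h3 : t * ((Real.log (f 0) - Real.log (f x0)) / t)
                  = Real.log (f 0) - Real.log (f x0) := mul_div_cancel₀ _ (ne_of_gt htpos)
              nlinarith [hlog]
            exact le_of_mul_le_mul_left h2 htpos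
          have hexp1 : (1:ℝ) ≤ Real.exp (c * x0) := Real.one_le_exp (by positivity)
          calc f x = f y := (hfabs x).symm
            _ = Real.exp (Real.log (f y)) := (Real.exp_log hfy).symm
            _ ≤ Real.exp (Real.log (f 0) - c * y) := Real.exp_le_exp.2 hkey
            _ = f 0 * Real.exp (-c * y) := by
                rw [Real.exp_sub, Real.exp_log hpos0, neg_mul, Real.exp_neg, div_eq_mul_inv]
            _ ≤ f 0 * Real.exp (c * x0) * Real.exp (-c * y) := by
                nlinarith [mul_le_mul_of_nonneg_right
                  (mul_le_mul_of_nonneg_left hexp1 hpos0.le) (Real.exp_pos (-c * y)).le]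
        · have hfx : f x = 0 := by
            rw [← hfabs x, ← hydef]; exact hfy.symm
          calc f x = 0 := hfx
            _ ≤ 0 := le_refl 0
            _ ≤ f 0 * Real.exp (c * x0) * Real.exp (-c * |x|) := by positivity
    · -- f x0 = 0
      refine ⟨1, one_pos, f 0 * Real.exp x0, by positivity, ?_⟩
      intro x
      rcases le_or_gt |x| x0 with hle | hgt
      · have h2 : (1:ℝ) ≤ Real.exp x0 * Real.exp (-1 * |x|) := by
          rw [← Real.exp_add]
          exact Real.one_le_exp (by nlinarith [abs_nonneg x])
        calc f x ≤ f 0 := hub x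
          _ = f 0 * 1 := (mul_one _).symm
          _ ≤ f 0 * (Real.exp x0 * Real.exp (-1 * |x|)) :=
              mul_le_mul_of_nonneg_left h2 hpos0.le
          _ = f 0 * Real.exp x0 * Real.exp (-1 * |x|) := (mul_assoc _ _ _).symm
      · have hz : f |x| ≤ 0 := by
          rw [hfx0]; exact hmono x0 |x| hx0pos.le hgt.le
        calc f x = f |x| := (hfabs x).symm
          _ ≤ 0 := hz
          _ ≤ f 0 * Real.exp x0 * Real.exp (-1 * |x|) := by positivity
  obtain ⟨c, hcpos, C, hC0, hbound⟩ := hexp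
  -- sqrt f is integrable
  have hsqrtf : Integrable (fun x => Real.sqrt (f x)) := by
    have hbase := (my_integrable_exp_neg_abs (show (0:ℝ) < c / 2 by linarith)).const_mul
      (Real.sqrt C)
    refine hbase.mono' ((Real.continuous_sqrt.measurable.comp hmeas).aestronglyMeasurable) ?_
    refine Filter.Eventually.of_forall fun x => ?_
    rw [Real.norm_eq_abs, abs_of_nonneg (Real.sqrt_nonneg _)]
    calc Real.sqrt (f x) ≤ Real.sqrt (C * Real.exp (-c * |x|)) :=
          Real.sqrt_le_sqrt (hbound x)
      _ = Real.sqrt C * Real.sqrt (Real.exp (-c * |x|)) := Real.sqrt_mul hC0 _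
      _ = Real.sqrt C * Real.exp (-(c/2) * |x|) := by
          rw [← Real.exp_half]; congr 1; ring
  -- the mixture density
  set p : ℝ → ℝ := fun t => lam * f (t - a) + (1 - lam) * f (t - b) with hpdef
  change Integrable (fun t => |Real.log (p t)| * p t)
  have hpmeas : Measurable p :=
    ((hmeas.comp (measurable_id.sub_const a)).const_mul lam).add
      ((hmeas.comp (measurable_id.sub_const b)).const_mul (1 - lam))
  have hp0 : ∀ t, 0 ≤ p t := fun t =>
    add_nonneg (mul_nonneg hl0 (h0 _)) (mul_nonneg (by linarith) (h0 _))
  have hpub : ∀ t, p t ≤ f 0 := by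
    intro t
    have h1 := hub (t - a)
    have h2 := hub (t - b)
    have := h0 (t - a); have := h0 (t - b)
    simp only [hpdef]
    nlinarith
  have hpint : Integrable p :=
    ((hintg.comp_sub_right a).const_mul lam).add
      ((hintg.comp_sub_right b).const_mul (1 - lam))
  have hsqrtp : Integrable (fun t => Real.sqrt (p t)) := by
    refine ((hsqrtf.comp_sub_right a).add (hsqrtf.comp_sub_right b)).mono'
      ((Real.continuous_sqrt.measurable.comp hpmeas).aestronglyMeasurable) ?_
    refine Filter.Eventually.of_forall fun t => ?_
    rw [Real.norm_eq_abs, abs_of_nonneg (Real.sqrt_nonneg _)]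
    have h1 : p t ≤ f (t - a) + f (t - b) := by
      have := h0 (t - a); have := h0 (t - b)
      simp only [hpdef]
      nlinarith
    calc Real.sqrt (p t) ≤ Real.sqrt (f (t - a) + f (t - b)) := Real.sqrt_le_sqrt h1
      _ ≤ Real.sqrt (f (t - a)) + Real.sqrt (f (t - b)) :=
          my_sqrt_add_le (h0 _) (h0 _)
  -- conclude by domination
  refine (hsqrtp.add (hpint.const_mul (Real.sqrt (f 0)))).mono'
    (((Real.measurable_log.comp hpmeas).abs.mul hpmeas).aestronglyMeasurable) ?_
  refine Filter.Eventually.of_forall fun t => ?_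
  rw [Real.norm_eq_abs, abs_of_nonneg (mul_nonneg (abs_nonneg _) (hp0 t))]
  exact my_abs_log_mul_self_le (hp0 t) (hpub t)
end

section
/- Suppose π ∈ (0,1)∖{1/2}, a < b, and f₀ is a density on ℝ with ∫|f₀| < ∞. If f̂ and f are zero-symmetric densities and ĝ = π f̂(·−a) + (1−π) f̂(·−b), g = π f(·−a) + (1−π) f(·−b), then when π < 1/2, ∫|f̂ − f| ≤ (1 − 2π)^{-1} ∫|ĝ − g|. -/
open MeasureTheory

/-- If `π ∈ (0, 1/2)`, `a < b`, and `f̂, f` are zero-symmetric densities with mixtures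
`ĝ = π f̂(·−a) + (1−π) f̂(·−b)` and `g = π f(·−a) + (1−π) f(·−b)`, then
`∫|f̂ − f| ≤ (1 − 2π)⁻¹ ∫|ĝ − g|`. -/
theorem inversion_L1_bound
    (pi a b : ℝ) (hpi0 : 0 < pi) (hpi : pi < 1 / 2) (hab : a < b)
    (fh f : ℝ → ℝ)
    (hmfh : Measurable fh) (hmf : Measurable f)
    (h0fh : ∀ x, 0 ≤ fh x) (h0f : ∀ x, 0 ≤ f x)
    (hifh : Integrable fh) (hif : Integrable f)
    (hnfh : ∫ x, fh x = 1) (hnf : ∫ x, f x = 1)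
    (hevfh : ∀ x, fh (-x) = fh x) (hevf : ∀ x, f (-x) = f x) :
    ∫ x, |fh x - f x| ≤
      (1 - 2 * pi)⁻¹ *
        ∫ x, |(pi * fh (x - a) + (1 - pi) * fh (x - b)) -
          (pi * f (x - a) + (1 - pi) * f (x - b))| := by
  set D : ℝ → ℝ := fun x => fh x - f x with hDdef
  have hDint : Integrable D := hifh.sub hif
  have hDa : Integrable (fun x => D (x - a)) := hDint.comp_sub_right a
  have hDb : Integrable (fun x => D (x - b)) := hDint.comp_sub_right b
  have h2pi : (0:ℝ) < 1 - 2 * pi := by linarith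
  set I : ℝ := ∫ x, |D x| with hIdef
  set J : ℝ := ∫ x, |(pi * fh (x - a) + (1 - pi) * fh (x - b)) -
      (pi * f (x - a) + (1 - pi) * f (x - b))| with hJdef
  -- integrability of the lower bound function
  have hlow : Integrable (fun x => (1 - pi) * |D (x - b)| - pi * |D (x - a)|) :=
    (hDb.abs.const_mul _).sub (hDa.abs.const_mul _)
  have hG : Integrable (fun x => |(pi * fh (x - a) + (1 - pi) * fh (x - b)) -
      (pi * f (x - a) + (1 - pi) * f (x - b))|) := by
    have : Integrable (fun x => pi * D (x - a) + (1 - pi) * D (x - b)) :=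
      (hDa.const_mul _).add (hDb.const_mul _)
    apply Integrable.abs
    convert this using 2 with x
    simp only [hDdef]
    ring
  -- pointwise bound
  have hpt : ∀ x, (1 - pi) * |D (x - b)| - pi * |D (x - a)| ≤
      |(pi * fh (x - a) + (1 - pi) * fh (x - b)) -
        (pi * f (x - a) + (1 - pi) * f (x - b))| := by
    intro x
    have hEq : (pi * fh (x - a) + (1 - pi) * fh (x - b)) -
        (pi * f (x - a) + (1 - pi) * f (x - b)) =
        pi * D (x - a) + (1 - pi) * D (x - b) := by
      simp only [hDdef]; ring
    rw [hEq]
    have h1 : |(1 - pi) * D (x - b)| - |pi * D (x - a)| ≤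
        |pi * D (x - a) + (1 - pi) * D (x - b)| := by
      have := abs_add_le (pi * D (x - a) + (1 - pi) * D (x - b)) (-(pi * D (x - a)))
      simp only [add_neg_cancel_comm] at this
      simpa [abs_neg] using sub_le_iff_le_add.mpr this
    have hpia : |pi * D (x - a)| = pi * |D (x - a)| := by
      rw [abs_mul, abs_of_pos hpi0]
    have hpib : |(1 - pi) * D (x - b)| = (1 - pi) * |D (x - b)| := by
      rw [abs_mul, abs_of_pos (by linarith : (0:ℝ) < 1 - pi)]
    rw [hpia, hpib] at h1
    exact h1
  -- integrate
  have hint : (1 - 2 * pi) * I ≤ J := by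
    have hmono : ∫ x, ((1 - pi) * |D (x - b)| - pi * |D (x - a)|) ≤ J :=
      integral_mono hlow hG hpt
    have hcb : ∫ x, |D (x - b)| = I := by
      rw [hIdef]; exact integral_sub_right_eq_self (fun x => |D x|) b
    have hca : ∫ x, |D (x - a)| = I := by
      rw [hIdef]; exact integral_sub_right_eq_self (fun x => |D x|) a
    have hsplit : ∫ x, ((1 - pi) * |D (x - b)| - pi * |D (x - a)|) =
        (1 - pi) * I - pi * I := by
      rw [integral_sub (hDb.abs.const_mul _) (hDa.abs.const_mul _),
        integral_const_mul, integral_const_mul, hcb, hca]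
    rw [hsplit] at hmono
    linarith
  calc I = (1 - 2 * pi)⁻¹ * ((1 - 2 * pi) * I) := by
        field_simp
    _ ≤ (1 - 2 * pi)⁻¹ * J :=
        mul_le_mul_of_nonneg_left hint (inv_nonneg.mpr h2pi.le)
end

section
/- Let ψ be a concave function on [0,∞) with values in [−∞,∞), let 0 < z₁ < z₂, set m = ψ(z₁) and M = ψ(z₂) with M > m + 1. If e^ψ integrates to at most 1 over ℝ, then the Lebesgue measure of {x : ψ(x) ≥ M − 1} is at least (z₂ − z₁)/(M − m), and consequently 1 ≥ e^{M−1}(z₂ − z₁)/(M − m). -/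
open MeasureTheory

/-- If `ψ` is concave on `[0,∞)` with `ψ(z₁) = m`, `ψ(z₂) = M`, `M > m + 1`,
`0 < z₁ < z₂`, and `∫ e^ψ ≤ 1`, then `Leb{ψ ≥ M − 1} ≥ (z₂−z₁)/(M−m)` and
consequently `e^{M−1}(z₂−z₁)/(M−m) ≤ 1`. -/
theorem level_set_measure_bound
    (ψ : ℝ → EReal) (htop : ∀ x, ψ x ≠ ⊤)
    (hconc : ∀ x ∈ Set.Ici (0:ℝ), ∀ y ∈ Set.Ici (0:ℝ), ∀ t : ℝ, 0 ≤ t → t ≤ 1 →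
      (t : EReal) * ψ x + ((1 - t : ℝ) : EReal) * ψ y ≤ ψ (t * x + (1 - t) * y))
    (z₁ z₂ m M : ℝ) (hz₁ : 0 < z₁) (hz : z₁ < z₂)
    (hm : ψ z₁ = (m : EReal)) (hM : ψ z₂ = (M : EReal)) (hMm : m + 1 < M)
    (hint : ∫⁻ x, (ψ x).exp ≤ 1) :
    ENNReal.ofReal ((z₂ - z₁) / (M - m)) ≤
        volume {x : ℝ | ((M - 1 : ℝ) : EReal) ≤ ψ x} ∧
      Real.exp (M - 1) * (z₂ - z₁) / (M - m) ≤ 1 := by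
  have hMm0 : (0:ℝ) < M - m := by linarith
  set L : ℝ := (z₂ - z₁) / (M - m) with hL
  have hL0 : 0 < L := div_pos (by linarith) hMm0
  have hLle : L ≤ z₂ - z₁ := by
    rw [hL, div_le_iff₀ hMm0]
    nlinarith
  -- the interval is contained in the level set
  have hsub : Set.Icc (z₂ - L) z₂ ⊆ {x : ℝ | ((M - 1 : ℝ) : EReal) ≤ ψ x} := by
    intro x hx
    obtain ⟨hx1, hx2⟩ := hx
    set t : ℝ := (z₂ - x) / (z₂ - z₁) with ht
    have hz12 : (0:ℝ) < z₂ - z₁ := by linarith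
    have ht0 : 0 ≤ t := div_nonneg (by linarith) hz12.le
    have htL : t ≤ 1 / (M - m) := by
      rw [ht, div_le_div_iff₀ hz12 hMm0]
      have : z₂ - x ≤ L := by linarith
      calc (z₂ - x) * (M - m) ≤ L * (M - m) := by nlinarith
        _ = z₂ - z₁ := by rw [hL]; field_simp
        _ = 1 * (z₂ - z₁) := by ring
    have ht1 : t ≤ 1 := htL.trans (by rw [div_le_one hMm0]; linarith)
    have hxeq : t * z₁ + (1 - t) * z₂ = x := by
      rw [ht]; field_simp; ring
    have := hconc z₁ hz₁.le z₂ (by linarith : (0:ℝ) ≤ z₂) t ht0 ht1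
    rw [hxeq, hm, hM] at this
    have hlhs : ((t * m + (1 - t) * M : ℝ) : EReal) ≤ ψ x := by
      push_cast
      exact this
    have hge : (M - 1 : ℝ) ≤ t * m + (1 - t) * M := by
      have : t * (M - m) ≤ 1 := by
        calc t * (M - m) ≤ (1 / (M - m)) * (M - m) := by nlinarith
          _ = 1 := by field_simp
      nlinarith
    exact le_trans (EReal.coe_le_coe_iff.mpr hge) hlhs
  have hvol : ENNReal.ofReal L ≤ volume {x : ℝ | ((M - 1 : ℝ) : EReal) ≤ ψ x} := by
    calc ENNReal.ofReal L = volume (Set.Icc (z₂ - L) z₂) := by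
          rw [Real.volume_Icc]; ring_nf
      _ ≤ _ := measure_mono hsub
  refine ⟨hvol, ?_⟩
  -- integral bound over the interval
  have hIcc : ENNReal.ofReal (Real.exp (M - 1)) * ENNReal.ofReal L ≤ 1 := by
    calc ENNReal.ofReal (Real.exp (M - 1)) * ENNReal.ofReal L
        = ∫⁻ _ in Set.Icc (z₂ - L) z₂, ENNReal.ofReal (Real.exp (M - 1)) := by
          rw [setLIntegral_const, Real.volume_Icc]; ring_nf
      _ ≤ ∫⁻ x in Set.Icc (z₂ - L) z₂, (ψ x).exp := by
          refine setLIntegral_mono' measurableSet_Icc fun x hx => ?_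
          have hx' := hsub hx
          exact le_trans (le_of_eq (EReal.exp_coe _).symm) (EReal.exp_monotone hx')
      _ ≤ ∫⁻ x, (ψ x).exp := setLIntegral_le_lintegral _ _
      _ ≤ 1 := hint
  rw [← ENNReal.ofReal_mul (Real.exp_nonneg _)] at hIcc
  have := ENNReal.ofReal_le_one.mp hIcc
  calc Real.exp (M - 1) * (z₂ - z₁) / (M - m) = Real.exp (M - 1) * L := by
        rw [hL]; ring
    _ ≤ 1 := this
end

section
/- Let ψ₁ > ψ₂ be reals and z₁ < z₂. If ∫_{z₁}^{z₂} exp(ψ₁ + (ψ₂−ψ₁)(t−z₁)/(z₂−z₁)) dt ≤ 1, then ψ₁ − ψ₂ ≥ e^{ψ₁}(z₂ − z₁) − 1. -/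
open intervalIntegral

/-- If `ψ₁ > ψ₂`, `z₁ < z₂`, and the integral of the exponential of the linear
interpolant over `[z₁,z₂]` is at most `1`, then `ψ₁ − ψ₂ ≥ e^{ψ₁}(z₂−z₁) − 1`. -/
theorem slope_lower_bound
    (ψ₁ ψ₂ z₁ z₂ : ℝ) (hψ : ψ₂ < ψ₁) (hz : z₁ < z₂)
    (hint : (∫ t in z₁..z₂,
      Real.exp (ψ₁ + (ψ₂ - ψ₁) * (t - z₁) / (z₂ - z₁))) ≤ 1) :
    Real.exp ψ₁ * (z₂ - z₁) - 1 ≤ ψ₁ - ψ₂ := by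
  have hL0 : (0:ℝ) < z₂ - z₁ := by linarith
  set c := (ψ₂ - ψ₁) / (z₂ - z₁) with hc
  have hc0 : c ≠ 0 := by
    rw [hc]
    exact div_ne_zero (by linarith) (by linarith)
  have key : (∫ t in z₁..z₂,
      Real.exp (ψ₁ + (ψ₂ - ψ₁) * (t - z₁) / (z₂ - z₁)))
      = (Real.exp ψ₁ - Real.exp ψ₂) * (z₂ - z₁) / (ψ₁ - ψ₂) := by
    have h1 : ∀ t : ℝ, ψ₁ + (ψ₂ - ψ₁) * (t - z₁) / (z₂ - z₁)
        = c * t + (ψ₁ - c * z₁) := by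
      intro t
      rw [hc]
      field_simp
      ring
    simp_rw [h1]
    rw [intervalIntegral.integral_comp_mul_add Real.exp hc0, integral_exp]
    have e1 : c * z₂ + (ψ₁ - c * z₁) = ψ₂ := by
      rw [hc]; field_simp; ring
    have e2 : c * z₁ + (ψ₁ - c * z₁) = ψ₁ := by ring
    have hne : ψ₂ - ψ₁ ≠ 0 := by linarith
    have hne2 : ψ₁ - ψ₂ ≠ 0 := by linarith
    rw [e1, e2, hc, smul_eq_mul]
    field_simp
    ring
  rw [key] at hint
  set s := ψ₁ - ψ₂ with hs
  have hs0 : (0:ℝ) < s := by rw [hs]; linarith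
  have hint' : (Real.exp ψ₁ - Real.exp ψ₂) * (z₂ - z₁) ≤ s := by
    rw [div_le_one hs0] at hint
    linarith
  have h3 : Real.exp ψ₂ * (1 + s) ≤ Real.exp ψ₁ := by
    have := Real.add_one_le_exp s
    have hx : Real.exp ψ₂ * Real.exp s = Real.exp ψ₁ := by
      rw [← Real.exp_add, hs]; ring_nf
    nlinarith [Real.exp_pos ψ₂]
  nlinarith [Real.exp_pos ψ₁, Real.exp_pos ψ₂, mul_pos hs0 hL0]
end
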